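/- With k, A, B, U, w_N as above (w_N = 4Σ_{S∈U} s_S, U = {S : |S| odd, |S∩A| even}, A = {1,…,k}), for every i with 1 ≤ i ≤ n−1 and i ≠ k, the minimal eigenvalue of Δ(w_N) acting on V_n^i is at least 2^n. -/

import Mathlib

open Finset

noncomputable def chii {n : ℕ} (v T : Finset (Fin n)) : ℝ :=
  ∏ j ∈ T, (if j ∈ v then (-1 : ℝ) else 1)

lemma chii_eq {n : ℕ} (v T : Finset (Fin n)) :
    chii v T = (-1 : ℝ) ^ ((T ∩ v).card) := by
  classical
  rw [chii, ← Finset.prod_filter_mul_prod_filter_not T (fun j => j ∈ v)]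
  rw [Finset.prod_congr rfl (fun j hj => if_pos (Finset.mem_filter.mp hj).2),
      Finset.prod_congr rfl (fun j hj => if_neg (Finset.mem_filter.mp hj).2)]
  simp [Finset.prod_const, Finset.filter_mem_eq_inter]

lemma chii_mul {n : ℕ} (v w T : Finset (Fin n)) :
    chii v T * chii w T = chii (symmDiff v w) T := by
  classical
  rw [chii, chii, chii, ← Finset.prod_mul_distrib]
  refine Finset.prod_congr rfl fun j _ => ?_
  by_cases hv : j ∈ v <;> by_cases hw : j ∈ w <;>
    simp [hv, hw, Finset.mem_symmDiff]

lemma chii_sum {n : ℕ} (v : Finset (Fin n)) :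
    ∑ T : Finset (Fin n), chii v T = if v = ∅ then (2 : ℝ) ^ n else 0 := by
  classical
  have h := Finset.prod_add (fun j : Fin n => if j ∈ v then (-1 : ℝ) else 1)
    (fun _ => (1 : ℝ)) Finset.univ
  simp only [Finset.prod_const_one, mul_one] at h
  rw [Finset.powerset_univ] at h
  have h2 : ∑ T : Finset (Fin n), chii v T
      = ∏ j : Fin n, ((if j ∈ v then (-1 : ℝ) else 1) + 1) := by
    rw [h]; rfl
  rw [h2]
  by_cases hv : v = ∅
  · simp [hv]; norm_num
  · rw [if_neg hv]
    obtain ⟨j, hj⟩ := Finset.nonempty_iff_ne_empty.mpr hv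
    exact Finset.prod_eq_zero (Finset.mem_univ j) (by simp [hj])

/-- With A = {1,…,k}, U = {S : |S| odd, |S∩A| even}, w_N = 4Σ_{T∈U}s_T, for every
1 ≤ i ≤ n−1 with i ≠ k, the minimal eigenvalue of Δ(w_N) on Vₙⁱ is at least 2ⁿ:
Δ(w_N) acts diagonally with eigenvalue Δ̂(w_N)(S) = 4Σ_{T∈U}(1−(−1)^{|S∩T|}) on the
basis vector S, and each such eigenvalue with |S| = i is ≥ 2ⁿ. -/
theorem stmt11 (n k : ℕ) (hk1 : 1 ≤ k) (hkn : k ≤ n - 1)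
    (A : Finset (Fin n)) (hA : A = Finset.univ.filter (fun i : Fin n => (i : ℕ) < k))
    (U : Finset (Finset (Fin n)))
    (hU : U = Finset.univ.filter (fun S : Finset (Fin n) =>
      Odd S.card ∧ Even ((S ∩ A).card)))
    (i : ℕ) (hi1 : 1 ≤ i) (hin : i ≤ n - 1) (hik : i ≠ k) :
    ∀ S : Finset (Fin n), S.card = i →
      (2 : ℝ) ^ n ≤ 4 * ∑ T ∈ U, ((1 : ℝ) - (-1 : ℝ) ^ ((S ∩ T).card)) := by
  classical
  intro S hS
  have hn2 : 2 ≤ n := by omega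
  have hkn' : k < n := by omega
  have hin' : i < n := by omega
  -- card of A
  have hAcard : A.card = k := by
    have himg : A.image Fin.val = Finset.range k := by
      ext m
      simp only [hA, Finset.mem_image, Finset.mem_filter, Finset.mem_univ, true_and,
        Finset.mem_range]
      constructor
      · rintro ⟨j, hj, rfl⟩; exact hj
      · intro hm; exact ⟨⟨m, lt_trans hm hkn'⟩, hm, rfl⟩
    calc A.card = (A.image Fin.val).card :=
          (Finset.card_image_of_injective A Fin.val_injective).symm
      _ = k := by rw [himg, Finset.card_range]
  have hAne : A ≠ ∅ := by
    intro h; rw [h] at hAcard; simp at hAcard; omega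
  have hSne : S ≠ ∅ := by
    intro h; rw [h] at hS; simp at hS; omega
  have hcardU : (Finset.univ : Finset (Fin n)).card = n := by simp
  have hAneU : (Finset.univ : Finset (Fin n)) ≠ A := by
    intro h; rw [← h, hcardU] at hAcard; omega
  have hSneU : (Finset.univ : Finset (Fin n)) ≠ S := by
    intro h; rw [← h, hcardU] at hS; omega
  have hASne : A ≠ S := by
    intro h; rw [h, hS] at hAcard; omega
  -- indicator identity
  have F := fun T : Finset (Fin n) =>
    (1 - chii Finset.univ T) * (1 + chii A T) * (1 - chii S T)
  have hchiU : ∀ T : Finset (Fin n), chii Finset.univ T = (-1 : ℝ) ^ T.card := by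
    intro T; rw [chii_eq, Finset.inter_univ]
  have key : 4 * ∑ T ∈ U, ((1 : ℝ) - (-1 : ℝ) ^ ((S ∩ T).card))
      = ∑ T : Finset (Fin n),
        (1 - chii Finset.univ T) * (1 + chii A T) * (1 - chii S T) := by
    rw [hU, ← Finset.sum_filter_add_sum_filter_not Finset.univ
      (fun T : Finset (Fin n) => Odd T.card ∧ Even ((T ∩ A).card))
      (fun T => (1 - chii Finset.univ T) * (1 + chii A T) * (1 - chii S T))]
    have h2 : ∑ T ∈ Finset.univ.filter
        (fun T : Finset (Fin n) => ¬(Odd T.card ∧ Even ((T ∩ A).card))),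
        (1 - chii Finset.univ T) * (1 + chii A T) * (1 - chii S T) = 0 := by
      apply Finset.sum_eq_zero
      intro T hT
      rw [Finset.mem_filter] at hT
      rcases hT with ⟨-, hT⟩
      rw [not_and_or] at hT
      rcases hT with hT | hT
      · rw [hchiU T, Nat.not_odd_iff_even.mp hT |>.neg_one_pow]; ring
      · rw [chii_eq A T, (Nat.odd_iff.mpr (by
          rcases Nat.even_or_odd ((T ∩ A).card) with h | h
          · exact absurd h hT
          · exact Nat.odd_iff.mp h)).neg_one_pow]
        ring
    rw [h2, add_zero, Finset.mul_sum]
    apply Finset.sum_congr rfl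
    intro T hT
    rw [Finset.mem_filter] at hT
    rcases hT with ⟨-, hodd, heven⟩
    rw [hchiU T, hodd.neg_one_pow, chii_eq A T, heven.neg_one_pow,
      chii_eq S T, Finset.inter_comm S T]
    ring
  rw [key]
  -- expand
  have expand : ∀ T : Finset (Fin n),
      (1 - chii Finset.univ T) * (1 + chii A T) * (1 - chii S T)
      = 1 - chii Finset.univ T + chii A T - chii (symmDiff Finset.univ A) T
        - chii S T + chii (symmDiff Finset.univ S) T - chii (symmDiff A S) T
        + chii (symmDiff Finset.univ (symmDiff A S)) T := by
    intro T
    rw [← chii_mul Finset.univ A T, ← chii_mul Finset.univ S T, ← chii_mul A S T,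
      ← chii_mul Finset.univ (symmDiff A S) T, ← chii_mul A S T]
    ring
  rw [Finset.sum_congr rfl (fun T _ => expand T)]
  have hzero : ∀ v : Finset (Fin n), v ≠ ∅ → ∑ T : Finset (Fin n), chii v T = 0 := by
    intro v hv; rw [chii_sum, if_neg hv]
  have hnonneg : ∀ v : Finset (Fin n), 0 ≤ ∑ T : Finset (Fin n), chii v T := by
    intro v; rw [chii_sum]; split <;> positivity
  have hUne : (Finset.univ : Finset (Fin n)) ≠ ∅ := by
    simp [Finset.univ_eq_empty_iff]; exact ⟨⟨0, by omega⟩⟩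
  have hsd : ∀ v w : Finset (Fin n), v ≠ w → symmDiff v w ≠ ∅ := by
    intro v w hvw h
    exact hvw (symmDiff_eq_bot.mp h)
  have hone : ∑ T : Finset (Fin n), (1 : ℝ) = (2 : ℝ) ^ n := by
    simp [Finset.card_univ]
  simp only [Finset.sum_add_distrib, Finset.sum_sub_distrib]
  rw [hone, hzero _ hUne, hzero _ hAne, hzero _ (hsd _ _ hAneU),
    hzero _ hSne, hzero _ (hsd _ _ hSneU), hzero _ (hsd _ _ hASne)]
  have := hnonneg (symmDiff Finset.univ (symmDiff A S))
  linarith
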